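/- arXiv:1908.07294 — 3 statements merged into one kernel-verified Lean document; each statement's English description precedes it below -/
import Mathlib

section
/- The class of polyhedral subsets of ℤ^m is closed under finite union, finite intersection, and set difference. -/
/-- An elementary region in `ℤ^m`: a hyperplane `{z | a·z = b}`, an open half-space
`{z | a·z > b}`, or a congruence set `{z | a·z ≡ b (mod c)}` with `c > 0`. -/
def ElementaryRegion {m : ℕ} (E : Set (Fin m → ℤ)) : Prop :=
  (∃ (a : Fin m → ℤ) (b : ℤ), E = {z | (∑ i, a i * z i) = b}) ∨
  (∃ (a : Fin m → ℤ) (b : ℤ), E = {z | (∑ i, a i * z i) > b}) ∨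
  (∃ (a : Fin m → ℤ) (b c : ℤ), 0 < c ∧ E = {z | (∑ i, a i * z i) ≡ b [ZMOD c]})

/-- A basic polyhedral set is a finite intersection of elementary regions. -/
def BasicPolyhedral {m : ℕ} (B : Set (Fin m → ℤ)) : Prop :=
  ∃ (k : ℕ) (E : Fin k → Set (Fin m → ℤ)),
    (∀ i, ElementaryRegion (E i)) ∧ B = ⋂ i, E i

/-- A polyhedral set is a finite disjoint union of basic polyhedral sets. -/
def Polyhedral {m : ℕ} (P : Set (Fin m → ℤ)) : Prop :=
  ∃ (k : ℕ) (B : Fin k → Set (Fin m → ℤ)),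
    (∀ i, BasicPolyhedral (B i)) ∧
    (∀ i j, i ≠ j → Disjoint (B i) (B j)) ∧
    P = ⋃ i, B i

namespace PolyAux

variable {m : ℕ}

lemma elem_empty : ElementaryRegion (∅ : Set (Fin m → ℤ)) := by
  refine Or.inl ⟨0, 1, ?_⟩
  ext z; simp

lemma elem_univ : ElementaryRegion (Set.univ : Set (Fin m → ℤ)) := by
  refine Or.inl ⟨0, 0, ?_⟩
  ext z; simp

lemma elem_basic {E : Set (Fin m → ℤ)} (h : ElementaryRegion E) : BasicPolyhedral E :=
  ⟨1, fun _ => E, fun _ => h, (Set.iInter_const E).symm⟩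

lemma basic_univ : BasicPolyhedral (Set.univ : Set (Fin m → ℤ)) :=
  elem_basic elem_univ

lemma basic_empty : BasicPolyhedral (∅ : Set (Fin m → ℤ)) :=
  elem_basic elem_empty

lemma basic_inter {B C : Set (Fin m → ℤ)} (hB : BasicPolyhedral B)
    (hC : BasicPolyhedral C) : BasicPolyhedral (B ∩ C) := by
  obtain ⟨k, E, hE, rfl⟩ := hB
  obtain ⟨l, F, hF, rfl⟩ := hC
  refine ⟨k + l, Fin.append E F, ?_, ?_⟩
  · intro i
    refine Fin.addCases (fun i => ?_) (fun i => ?_) i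
    · rw [Fin.append_left]; exact hE i
    · rw [Fin.append_right]; exact hF i
  · ext z
    simp only [Set.mem_inter_iff, Set.mem_iInter]
    constructor
    · rintro ⟨h1, h2⟩ i
      refine Fin.addCases (fun i => ?_) (fun i => ?_) i
      · rw [Fin.append_left]; exact h1 i
      · rw [Fin.append_right]; exact h2 i
    · intro h
      exact ⟨fun i => by simpa [Fin.append_left] using h (Fin.castAdd l i),
             fun i => by simpa [Fin.append_right] using h (Fin.natAdd k i)⟩

lemma basic_poly {B : Set (Fin m → ℤ)} (h : BasicPolyhedral B) : Polyhedral B :=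
  ⟨1, fun _ => B, fun _ => h, fun i j hij => absurd (Subsingleton.elim i j) hij, (Set.iUnion_const B).symm⟩

lemma poly_empty : Polyhedral (∅ : Set (Fin m → ℤ)) :=
  basic_poly basic_empty

lemma poly_univ : Polyhedral (Set.univ : Set (Fin m → ℤ)) :=
  basic_poly basic_univ

lemma polyhedral_of_finite {ι : Type} [Fintype ι] (B : ι → Set (Fin m → ℤ))
    (hb : ∀ i, BasicPolyhedral (B i)) (hd : ∀ i j, i ≠ j → Disjoint (B i) (B j)) :
    Polyhedral (⋃ i, B i) := by
  let e := Fintype.equivFin ι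
  refine ⟨Fintype.card ι, B ∘ e.symm, fun i => hb _, ?_, ?_⟩
  · intro i j hij
    exact hd _ _ (fun h => hij (e.symm.injective h))
  · exact (e.symm.surjective.iUnion_comp B).symm

lemma poly_flatten {ι : Type} [Fintype ι] (P : ι → Set (Fin m → ℤ))
    (hp : ∀ i, Polyhedral (P i)) (hd : ∀ i j, i ≠ j → Disjoint (P i) (P j)) :
    Polyhedral (⋃ i, P i) := by
  choose k B hB hDis hEq using hp
  have : (⋃ i, P i) = ⋃ p : Σ i, Fin (k i), B p.1 p.2 := by
    rw [Set.iUnion_sigma]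
    exact Set.iUnion_congr hEq
  rw [this]
  refine polyhedral_of_finite _ (fun p => hB p.1 p.2) ?_
  rintro ⟨i, a⟩ ⟨j, b⟩ hne
  by_cases hij : i = j
  · subst hij
    have hab : a ≠ b := fun h => hne (by rw [h])
    exact hDis i a b hab
  · refine (hd i j hij).mono ?_ ?_
    · rw [hEq i]; exact Set.subset_iUnion _ a
    · rw [hEq j]; exact Set.subset_iUnion _ b

lemma poly_pair {A B : Set (Fin m → ℤ)} (hA : Polyhedral A) (hB : Polyhedral B)
    (hd : Disjoint A B) : Polyhedral (A ∪ B) := by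
  have h := poly_flatten (ι := Bool) (fun b => cond b A B)
    (by rintro (_ | _) <;> assumption)
    (by rintro (_ | _) (_ | _) h <;> simp_all [hd.symm])
  have he : (⋃ b : Bool, cond b A B) = A ∪ B := by
    ext z
    simp only [Set.mem_iUnion, Bool.exists_bool, cond_false, cond_true, Set.mem_union]
    tauto
  rwa [he] at h

lemma poly_inter {P Q : Set (Fin m → ℤ)} (hP : Polyhedral P) (hQ : Polyhedral Q) :
    Polyhedral (P ∩ Q) := by
  obtain ⟨k, B, hB, hdB, rfl⟩ := hP
  obtain ⟨l, C, hC, hdC, rfl⟩ := hQ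
  have : ((⋃ i, B i) ∩ ⋃ j, C j) = ⋃ p : Fin k × Fin l, B p.1 ∩ C p.2 := by
    ext z
    simp only [Set.mem_inter_iff, Set.mem_iUnion, Prod.exists]
    tauto
  rw [this]
  refine polyhedral_of_finite _ (fun p => basic_inter (hB p.1) (hC p.2)) ?_
  rintro ⟨i, a⟩ ⟨j, b⟩ hne
  by_cases hij : i = j
  · subst hij
    have hab : a ≠ b := fun h => hne (by rw [h])
    exact (hdC a b hab).mono Set.inter_subset_right Set.inter_subset_right
  · exact (hdB i j hij).mono Set.inter_subset_left Set.inter_subset_left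

lemma elem_compl {E : Set (Fin m → ℤ)} (hE : ElementaryRegion E) : Polyhedral Eᶜ := by
  rcases hE with ⟨a, b, rfl⟩ | ⟨a, b, rfl⟩ | ⟨a, b, c, hc, rfl⟩
  · -- equality region
    have : {z : Fin m → ℤ | (∑ i, a i * z i) = b}ᶜ =
        {z | (∑ i, a i * z i) > b} ∪ {z | (∑ i, (-a i) * z i) > -b} := by
      ext z
      simp only [Set.mem_compl_iff, Set.mem_setOf_eq, Set.mem_union, neg_mul,
        Finset.sum_neg_distrib]
      omega
    rw [this]
    refine poly_pair (basic_poly (elem_basic ?_)) (basic_poly (elem_basic ?_)) ?_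
    · exact Or.inr (Or.inl ⟨a, b, rfl⟩)
    · exact Or.inr (Or.inl ⟨fun i => -a i, -b, rfl⟩)
    · rw [Set.disjoint_left]
      intro z h1 h2
      simp only [Set.mem_setOf_eq, neg_mul, Finset.sum_neg_distrib] at h1 h2
      omega
  · -- half space
    have : {z : Fin m → ℤ | (∑ i, a i * z i) > b}ᶜ =
        {z | (∑ i, a i * z i) = b} ∪ {z | (∑ i, (-a i) * z i) > -b} := by
      ext z
      simp only [Set.mem_compl_iff, Set.mem_setOf_eq, Set.mem_union, neg_mul,
        Finset.sum_neg_distrib]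
      omega
    rw [this]
    refine poly_pair (basic_poly (elem_basic ?_)) (basic_poly (elem_basic ?_)) ?_
    · exact Or.inl ⟨a, b, rfl⟩
    · exact Or.inr (Or.inl ⟨fun i => -a i, -b, rfl⟩)
    · rw [Set.disjoint_left]
      intro z h1 h2
      simp only [Set.mem_setOf_eq, neg_mul, Finset.sum_neg_distrib] at h1 h2
      omega
  · -- congruence region
    have hc' : ((c.toNat : ℤ)) = c := Int.toNat_of_nonneg hc.le
    set S : Fin c.toNat → Set (Fin m → ℤ) := fun r =>
      if ((r : ℤ) ≡ b [ZMOD c]) then ∅ else {z | (∑ i, a i * z i) ≡ (r : ℤ) [ZMOD c]}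
      with hS
    have key : {z : Fin m → ℤ | (∑ i, a i * z i) ≡ b [ZMOD c]}ᶜ = ⋃ r, S r := by
      ext z
      simp only [Set.mem_compl_iff, Set.mem_setOf_eq, Set.mem_iUnion, hS]
      constructor
      · intro h
        have h1 : (0:ℤ) ≤ (∑ i, a i * z i) % c := Int.emod_nonneg _ hc.ne'
        have h2 : (∑ i, a i * z i) % c < c := Int.emod_lt_of_pos _ hc
        refine ⟨⟨((∑ i, a i * z i) % c).toNat, by omega⟩, ?_⟩
        have hr : ((((∑ i, a i * z i) % c).toNat : ℤ)) = (∑ i, a i * z i) % c := by omega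
        rw [if_neg, Set.mem_setOf_eq]
        · show (∑ i, a i * z i) % c = _ % c
          simp only [hr]
          exact (Int.emod_emod_of_dvd _ dvd_rfl).symm
        · intro hcon
          apply h
          have : (∑ i, a i * z i) % c ≡ b [ZMOD c] := by rwa [hr] at hcon
          calc (∑ i, a i * z i) ≡ (∑ i, a i * z i) % c [ZMOD c] :=
                (Int.emod_emod_of_dvd _ dvd_rfl).symm
            _ ≡ b [ZMOD c] := this
      · rintro ⟨r, hr⟩
        by_cases hcon : ((r : ℤ) ≡ b [ZMOD c])
        · rw [if_pos hcon] at hr; exact absurd hr (Set.notMem_empty z)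
        · rw [if_neg hcon] at hr
          intro h
          exact hcon ((hr.symm.trans h))
    rw [key]
    refine polyhedral_of_finite _ (fun r => ?_) ?_
    · by_cases hcon : ((r : ℤ) ≡ b [ZMOD c])
      · rw [hS]; simp only [if_pos hcon]; exact basic_empty
      · rw [hS]; simp only [if_neg hcon]
        exact elem_basic (Or.inr (Or.inr ⟨a, (r : ℤ), c, hc, rfl⟩))
    · intro r r' hne
      rw [hS]
      by_cases h1 : ((r : ℤ) ≡ b [ZMOD c])
      · simp [if_pos h1]
      by_cases h2 : ((r' : ℤ) ≡ b [ZMOD c])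
      · simp [if_pos h2]
      simp only [if_neg h1, if_neg h2]
      rw [Set.disjoint_left]
      intro z hz1 hz2
      simp only [Set.mem_setOf_eq] at hz1 hz2
      have : (r : ℤ) ≡ (r' : ℤ) [ZMOD c] := hz1.symm.trans hz2
      have hrc : ((r : ℕ) : ℤ) < c := by have := r.isLt; omega
      have hrc' : ((r' : ℕ) : ℤ) < c := by have := r'.isLt; omega
      have heq : ((r : ℕ) : ℤ) = ((r' : ℕ) : ℤ) := by
        have h3 : ((r : ℕ) : ℤ) % c = ((r' : ℕ) : ℤ) % c := this
        rwa [Int.emod_eq_of_lt (by positivity) hrc,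
          Int.emod_eq_of_lt (by positivity) hrc'] at h3
      exact hne (Fin.ext (by exact_mod_cast heq))

lemma basic_compl_aux : ∀ (k : ℕ) (E : Fin k → Set (Fin m → ℤ)),
    (∀ i, ElementaryRegion (E i)) → Polyhedral (⋂ i, E i)ᶜ := by
  intro k
  induction k with
  | zero =>
    intro E hE
    simp only [Set.iInter_of_empty, Set.compl_univ]
    exact poly_empty
  | succ n ih =>
    intro E hE
    have hsplit : (⋂ i, E i) = E 0 ∩ ⋂ i : Fin n, E i.succ := by
      ext z
      simp only [Set.mem_iInter, Set.mem_inter_iff]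
      exact Fin.forall_fin_succ
    rw [hsplit]
    have hre : (E 0 ∩ ⋂ i : Fin n, E i.succ)ᶜ =
        (E 0)ᶜ ∪ (E 0 ∩ (⋂ i : Fin n, E i.succ)ᶜ) := by
      ext z
      simp only [Set.mem_compl_iff, Set.mem_inter_iff, Set.mem_union]
      tauto
    rw [hre]
    refine poly_pair (elem_compl (hE 0))
      (poly_inter (basic_poly (elem_basic (hE 0))) (ih _ fun i => hE i.succ)) ?_
    rw [Set.disjoint_left]
    intro z h1 h2
    exact h1 h2.1

lemma basic_compl {B : Set (Fin m → ℤ)} (h : BasicPolyhedral B) : Polyhedral Bᶜ := by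
  obtain ⟨k, E, hE, rfl⟩ := h
  exact basic_compl_aux k E hE

lemma poly_iInter : ∀ (k : ℕ) (P : Fin k → Set (Fin m → ℤ)),
    (∀ i, Polyhedral (P i)) → Polyhedral (⋂ i, P i) := by
  intro k
  induction k with
  | zero =>
    intro P hP
    simp only [Set.iInter_of_empty]
    exact poly_univ
  | succ n ih =>
    intro P hP
    have hsplit : (⋂ i, P i) = P 0 ∩ ⋂ i : Fin n, P i.succ := by
      ext z
      simp only [Set.mem_iInter, Set.mem_inter_iff]
      exact Fin.forall_fin_succ
    rw [hsplit]
    exact poly_inter (hP 0) (ih _ fun i => hP i.succ)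

lemma poly_compl {P : Set (Fin m → ℤ)} (h : Polyhedral P) : Polyhedral Pᶜ := by
  obtain ⟨k, B, hB, _, rfl⟩ := h
  rw [Set.compl_iUnion]
  exact poly_iInter k _ fun i => basic_compl (hB i)

lemma poly_iUnion (k : ℕ) (P : Fin k → Set (Fin m → ℤ))
    (hP : ∀ i, Polyhedral (P i)) : Polyhedral (⋃ i, P i) := by
  have : (⋃ i, P i) = (⋂ i, (P i)ᶜ)ᶜ := by
    rw [← Set.compl_iUnion, compl_compl]
  rw [this]
  exact poly_compl (poly_iInter k _ fun i => poly_compl (hP i))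

end PolyAux

/-- The class of polyhedral subsets of `ℤ^m` is closed under finite union,
finite intersection, and set difference. -/
theorem polyhedral_closure {m : ℕ}
    (k : ℕ) (F : Fin k → Set (Fin m → ℤ)) (hF : ∀ i, Polyhedral (F i))
    (P Q : Set (Fin m → ℤ)) (hP : Polyhedral P) (hQ : Polyhedral Q) :
    Polyhedral (⋃ i, F i) ∧ Polyhedral (⋂ i, F i) ∧ Polyhedral (P \ Q) := by
  refine ⟨PolyAux.poly_iUnion k F hF, PolyAux.poly_iInter k F hF, ?_⟩
  rw [Set.diff_eq]
  exact PolyAux.poly_inter hP (PolyAux.poly_compl hQ)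
end

section
/- For each n ≥ 1, the set {(x, 0, 0, …, 0) ∈ ℤ^n : x ≡ 0 (mod 2)} is a polyhedral set but is not an n-constraint (i.e., it cannot be expressed as a Boolean combination of n-atoms). -/
/-- An `n`-atom: a hyperplane or open half-space in `ℤ^n`. -/
def NAtom {n : ℕ} (E : Set (Fin n → ℤ)) : Prop :=
  (∃ (a : Fin n → ℤ) (b : ℤ), E = {v | (∑ i, a i * v i) = b}) ∨
  (∃ (a : Fin n → ℤ) (b : ℤ), E = {v | (∑ i, a i * v i) > b})

/-- An `n`-constraint: a Boolean combination of `n`-atoms. -/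
inductive NConstraint {n : ℕ} : Set (Fin n → ℤ) → Prop
  | atom (E : Set (Fin n → ℤ)) : NAtom E → NConstraint E
  | inter (A B : Set (Fin n → ℤ)) : NConstraint A → NConstraint B → NConstraint (A ∩ B)
  | union (A B : Set (Fin n → ℤ)) : NConstraint A → NConstraint B → NConstraint (A ∪ B)
  | compl (A : Set (Fin n → ℤ)) : NConstraint A → NConstraint Aᶜ

/-- For each `n ≥ 1`, the set `{(x,0,…,0) ∈ ℤ^n : x ≡ 0 (mod 2)}` is polyhedral
but is not an `n`-constraint. -/
theorem polyhedral_not_nconstraint (n : ℕ) (hn : 1 ≤ n) :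
    Polyhedral {v : Fin n → ℤ | (2 ∣ v ⟨0, hn⟩) ∧ ∀ i : Fin n, (i : ℕ) ≠ 0 → v i = 0} ∧
    ¬ NConstraint {v : Fin n → ℤ | (2 ∣ v ⟨0, hn⟩) ∧ ∀ i : Fin n, (i : ℕ) ≠ 0 → v i = 0} := by
  set S : Set (Fin n → ℤ) :=
    {v : Fin n → ℤ | (2 ∣ v ⟨0, hn⟩) ∧ ∀ i : Fin n, (i : ℕ) ≠ 0 → v i = 0} with hS
  have hsum : ∀ (i : Fin n) (v : Fin n → ℤ),
      (∑ j, (if j = i then (1:ℤ) else 0) * v j) = v i := by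
    intro i v
    rw [Finset.sum_eq_single i]
    · simp
    · intro j _ hj; simp [hj]
    · simp
  constructor
  · -- Polyhedral
    refine ⟨1, fun _ => S, ?_, ?_, ?_⟩
    · intro _
      refine ⟨n, fun i => if (i : ℕ) = 0 then
          {v | (∑ j, (if j = i then (1:ℤ) else 0) * v j) ≡ 0 [ZMOD 2]}
        else {v | (∑ j, (if j = i then (1:ℤ) else 0) * v j) = 0}, ?_, ?_⟩
      · intro i
        by_cases h : (i : ℕ) = 0
        · exact Or.inr (Or.inr ⟨fun j => if j = i then 1 else 0, 0, 2, by norm_num,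
            by beta_reduce; rw [if_pos h]⟩)
        · exact Or.inl ⟨fun j => if j = i then 1 else 0, 0, by beta_reduce; rw [if_neg h]⟩
      · ext v
        simp only [hS, Set.mem_setOf_eq, Set.mem_iInter]
        constructor
        · rintro ⟨h2, h0⟩ i
          by_cases h : (i : ℕ) = 0
          · simp only [h, if_true, Set.mem_setOf_eq, hsum]
            have : i = ⟨0, hn⟩ := Fin.ext h
            rw [this]
            exact (Int.modEq_zero_iff_dvd).mpr h2
          · simp only [h, if_false, Set.mem_setOf_eq, hsum]
            exact h0 i h
        · intro h
          constructor
          · have := h ⟨0, hn⟩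
            simp only [if_true, Set.mem_setOf_eq, hsum] at this
            exact (Int.modEq_zero_iff_dvd).mp this
          · intro i hi
            have := h i
            simp only [hi, if_false, Set.mem_setOf_eq, hsum] at this
            exact this
    · intro i j hij
      exact absurd (Subsingleton.elim i j) hij
    · exact (Set.iUnion_const _).symm
  · -- not an n-constraint
    set L : ℤ → (Fin n → ℤ) := fun x i => if (i : ℕ) = 0 then x else 0 with hL
    have hsumL : ∀ (a : Fin n → ℤ) (x : ℤ), (∑ j, a j * L x j) = a ⟨0, hn⟩ * x := by
      intro a x
      rw [Finset.sum_eq_single ⟨0, hn⟩]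
      · simp [hL]
      · intro j _ hj
        have : (j : ℕ) ≠ 0 := fun h => hj (Fin.ext h)
        simp [hL, this]
      · simp
    have key : ∀ A : Set (Fin n → ℤ), NConstraint A →
        ∃ N : ℤ, (∀ x ≥ N, L x ∈ A) ∨ (∀ x ≥ N, L x ∉ A) := by
      intro A hA
      induction hA with
      | atom E hE =>
        rcases hE with ⟨a, b, rfl⟩ | ⟨a, b, rfl⟩
        · by_cases h0 : a ⟨0, hn⟩ = 0
          · by_cases hb : b = 0
            · exact ⟨0, Or.inl fun x _ => by simp [Set.mem_setOf_eq, hsumL, h0, hb]⟩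
            · refine ⟨0, Or.inr fun x _ hx => ?_⟩
              simp only [Set.mem_setOf_eq, hsumL, h0, zero_mul] at hx
              exact hb hx.symm
          · refine ⟨|b| + 1, Or.inr fun x hx hmem => ?_⟩
            simp only [Set.mem_setOf_eq, hsumL] at hmem
            have h1 : (1:ℤ) ≤ |a ⟨0, hn⟩| := Int.one_le_abs h0
            have h2 : |b| = |a ⟨0, hn⟩| * |x| := by rw [← abs_mul, hmem]
            have h3 : |b| + 1 ≤ |x| := le_trans hx (le_abs_self x)
            nlinarith [mul_nonneg (by linarith : (0:ℤ) ≤ |a ⟨0, hn⟩| - 1) (abs_nonneg x)]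
        · rcases lt_trichotomy (a ⟨0, hn⟩) 0 with hneg | hz | hpos
          · refine ⟨|b| + 1, Or.inr fun x hx hmem => ?_⟩
            simp only [Set.mem_setOf_eq, hsumL] at hmem
            have hx0 : (0:ℤ) ≤ x := by nlinarith [abs_nonneg b]
            nlinarith [neg_abs_le b,
              mul_nonneg (by linarith : (0:ℤ) ≤ -a ⟨0, hn⟩ - 1) hx0]
          · by_cases hb : 0 > b
            · exact ⟨0, Or.inl fun x _ => by simp [Set.mem_setOf_eq, hsumL, hz, hb]⟩
            · refine ⟨0, Or.inr fun x _ hx => ?_⟩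
              simp only [Set.mem_setOf_eq, hsumL, hz, zero_mul] at hx
              exact hb hx
          · refine ⟨|b| + 1, Or.inl fun x hx => ?_⟩
            simp only [Set.mem_setOf_eq, hsumL]
            have hx0 : (0:ℤ) ≤ x := by nlinarith [abs_nonneg b]
            nlinarith [le_abs_self b,
              mul_nonneg (by linarith : (0:ℤ) ≤ a ⟨0, hn⟩ - 1) hx0]
      | inter A B _ _ ihA ihB =>
        obtain ⟨N1, h1⟩ := ihA
        obtain ⟨N2, h2⟩ := ihB
        refine ⟨max N1 N2, ?_⟩
        rcases h1 with h1 | h1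
        · rcases h2 with h2 | h2
          · exact Or.inl fun x hx => ⟨h1 x (le_trans (le_max_left _ _) hx),
              h2 x (le_trans (le_max_right _ _) hx)⟩
          · exact Or.inr fun x hx hm => h2 x (le_trans (le_max_right _ _) hx) hm.2
        · exact Or.inr fun x hx hm => h1 x (le_trans (le_max_left _ _) hx) hm.1
      | union A B _ _ ihA ihB =>
        obtain ⟨N1, h1⟩ := ihA
        obtain ⟨N2, h2⟩ := ihB
        refine ⟨max N1 N2, ?_⟩
        rcases h1 with h1 | h1
        · exact Or.inl fun x hx => Or.inl (h1 x (le_trans (le_max_left _ _) hx))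
        · rcases h2 with h2 | h2
          · exact Or.inl fun x hx => Or.inr (h2 x (le_trans (le_max_right _ _) hx))
          · exact Or.inr fun x hx hm => hm.elim
              (h1 x (le_trans (le_max_left _ _) hx))
              (h2 x (le_trans (le_max_right _ _) hx))
      | compl A _ ih =>
        obtain ⟨N, h⟩ := ih
        rcases h with h | h
        · exact ⟨N, Or.inr fun x hx hm => hm (h x hx)⟩
        · exact ⟨N, Or.inl fun x hx => h x hx⟩
    intro hcon
    obtain ⟨N, h⟩ := key S hcon
    rcases h with h | h
    · have := h (2 * |N| + 1) (by cases abs_cases N with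
        | inl h' => omega
        | inr h' => omega)
      obtain ⟨hdvd, -⟩ := this
      simp only [hL] at hdvd
      norm_num at hdvd
    · refine h (2 * |N|) (by cases abs_cases N with
        | inl h' => omega
        | inr h' => omega) ?_
      refine ⟨?_, ?_⟩
      · simp [hL]
      · intro i hi
        simp [hL, hi]
end

section
/- Let A = (a_n) be an integer sequence with a_n ≥ 1 for all n, such that f(z) = Σ a_n z^n is a rational function. If lim_{n→∞} a_n^{1/n} = 1, then there exist constants β, d such that a_n ≤ β·n^d for all n ≥ 1. -/
open Filter Topology ENNReal NNReal

lemma eval_lower_bound (q : Polynomial ℂ) (hq : q ≠ 0)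
    (hroots : ∀ α ∈ q.roots, 1 ≤ ‖α‖) (r : ℝ) (hr0 : 0 ≤ r) (hr1 : r < 1) :
    ‖q.leadingCoeff‖ * (1 - r) ^ q.natDegree ≤ ‖q.eval (r : ℂ)‖ := by
  have hsplit : q.Splits := IsAlgClosed.splits q
  have hcard : Multiset.card q.roots = q.natDegree :=
    (Polynomial.splits_iff_card_roots).mp hsplit
  have key : ∀ (M : Multiset ℂ), (∀ α ∈ M, 1 ≤ ‖α‖) →
      (1 - r) ^ (Multiset.card M) ≤ ‖(M.map fun a => (r : ℂ) - a).prod‖ := by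
    intro M
    induction M using Multiset.induction with
    | empty => simp
    | cons a M ih =>
      intro hM
      rw [Multiset.map_cons, Multiset.prod_cons, Multiset.card_cons, pow_succ', norm_mul]
      have h1 : 1 - r ≤ ‖(r : ℂ) - a‖ := by
        have := norm_sub_norm_le a ((r : ℂ))
        rw [norm_sub_rev a _] at this
        have ha : 1 ≤ ‖a‖ := hM a (Multiset.mem_cons_self a M)
        have hr' : ‖((r : ℝ) : ℂ)‖ = r := by
          rw [Complex.norm_real, Real.norm_eq_abs, abs_of_nonneg hr0]
        linarith
      have h2 := ih (fun α hα => hM α (Multiset.mem_cons_of_mem hα))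
      have := mul_le_mul h1 h2 (pow_nonneg (by linarith) _) (norm_nonneg _)
      linarith
  have main : (1 - r) ^ q.natDegree ≤
      ‖Polynomial.eval (r:ℂ) (Multiset.map (fun a => Polynomial.X - Polynomial.C a) q.roots).prod‖ := by
    rw [Polynomial.eval_multiset_prod, Multiset.map_map]
    have := key q.roots hroots
    rw [hcard] at this
    simpa using this
  conv_rhs => rw [hsplit.eq_prod_roots]
  rw [Polynomial.eval_mul, Polynomial.eval_C, norm_mul]
  exact mul_le_mul_of_nonneg_left main (norm_nonneg _)

lemma eval_upper_bound (p : Polynomial ℂ) (r : ℝ) (hr0 : 0 ≤ r) (hr1 : r ≤ 1) :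
    ‖p.eval (r : ℂ)‖ ≤ ∑ i ∈ Finset.range (p.natDegree + 1), ‖p.coeff i‖ := by
  rw [Polynomial.eval_eq_sum_range]
  refine (norm_sum_le _ _).trans (Finset.sum_le_sum fun i _ => ?_)
  rw [norm_mul, norm_pow, Complex.norm_real]
  have h1 : ‖(r : ℝ)‖ ≤ 1 := by rw [Real.norm_eq_abs, abs_of_nonneg hr0]; exact hr1
  calc ‖p.coeff i‖ * ‖(r:ℝ)‖ ^ i ≤ ‖p.coeff i‖ * 1 := by
        gcongr; exact pow_le_one₀ (norm_nonneg _) h1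
    _ = ‖p.coeff i‖ := mul_one _

lemma radius_ge_one (a : ℕ → ℕ)
    (hlim : Tendsto (fun n : ℕ => (a n : ℝ) ^ (1 / (n : ℝ))) atTop (nhds 1)) :
    1 ≤ (FormalMultilinearSeries.ofScalars ℂ (fun n => (a n : ℂ))).radius := by
  refine ENNReal.le_of_forall_nnreal_lt fun r hr => ?_
  rcases eq_or_ne r 0 with rfl | hr0
  · simp
  have hrlt : (r : ℝ) < 1 := by exact_mod_cast hr
  have hrpos : (0 : ℝ) < r := by positivity
  set c : ℝ := 1 / r with hc
  have hc1 : 1 < c := by rw [hc, lt_div_iff₀ hrpos]; simpa using hrlt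
  have hev : ∀ᶠ n in atTop, (a n : ℝ) ^ (1 / (n : ℝ)) < c :=
    hlim.eventually_lt_const hc1
  refine (FormalMultilinearSeries.ofScalars ℂ fun n => (a n : ℂ)).le_radius_of_eventually_le 1 ?_
  filter_upwards [hev, eventually_ge_atTop 1] with n hn hn1
  rw [FormalMultilinearSeries.ofScalars_norm]
  have han : (0 : ℝ) ≤ (a n : ℝ) := by positivity
  have hn0 : (n : ℝ) ≠ 0 := by
    exact_mod_cast Nat.pos_of_ne_zero (by omega) |>.ne'
  have key : (a n : ℝ) ≤ c ^ n := by
    have h2 : ((a n : ℝ) ^ (1/(n:ℝ))) ^ (n:ℝ) ≤ c ^ (n:ℝ) :=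
      Real.rpow_le_rpow (Real.rpow_nonneg han _) hn.le (by positivity)
    rw [← Real.rpow_mul han, one_div, inv_mul_cancel₀ hn0, Real.rpow_one,
      Real.rpow_natCast] at h2
    exact h2
  have hnorm : ‖((a n : ℕ) : ℂ)‖ = (a n : ℝ) := by simp
  rw [hnorm]
  calc (a n : ℝ) * (r : ℝ) ^ n ≤ c ^ n * (r : ℝ) ^ n := by gcongr
    _ = (c * r) ^ n := (mul_pow _ _ _).symm
    _ = 1 := by rw [hc, one_div, inv_mul_cancel₀ (ne_of_gt hrpos), one_pow]

open Polynomial in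

lemma factor_roots_aux (g : ℂ → ℂ) (hg : ContinuousOn g (Metric.ball 0 1)) :
    ∀ (N : ℕ) (q p : Polynomial ℂ), q.natDegree ≤ N → q ≠ 0 →
    (∀ z ∈ Metric.ball (0:ℂ) 1, p.eval z = q.eval z * g z) →
    ∃ p1 q2 : Polynomial ℂ, q2 ≠ 0 ∧ (∀ α ∈ q2.roots, 1 ≤ ‖α‖) ∧
      ∀ z ∈ Metric.ball (0:ℂ) 1, p1.eval z = q2.eval z * g z := by
  intro N
  induction N with
  | zero =>
    intro q p hdeg hq hpq
    refine ⟨p, q, hq, fun α hα => ?_, hpq⟩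
    exfalso
    have h0 : q.natDegree = 0 := Nat.le_zero.mp hdeg
    have hqc : q = Polynomial.C (q.coeff 0) := Polynomial.eq_C_of_natDegree_eq_zero h0
    rw [hqc, Polynomial.roots_C] at hα
    exact absurd hα (Multiset.notMem_zero α)
  | succ N ih =>
    intro q p hdeg hq hpq
    by_cases hex : ∃ α ∈ Metric.ball (0:ℂ) 1, q.IsRoot α
    · obtain ⟨α, hαball, hαroot⟩ := hex
      obtain ⟨q1, hq1⟩ := (Polynomial.dvd_iff_isRoot).mpr hαroot
      have hq1ne : q1 ≠ 0 := by
        intro h; rw [h, mul_zero] at hq1; exact hq hq1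
      have hpα : p.IsRoot α := by
        have h := hpq α hαball
        rw [Polynomial.IsRoot.def, h, hαroot.eq_zero, zero_mul]
      obtain ⟨p1, hp1⟩ := (Polynomial.dvd_iff_isRoot).mpr hpα
      -- off α the identity holds by cancellation
      have hoff : ∀ z ∈ Metric.ball (0:ℂ) 1, z ≠ α → p1.eval z = q1.eval z * g z := by
        intro z hz hzα
        have h := hpq z hz
        rw [hp1, hq1] at h
        simp only [Polynomial.eval_mul, Polynomial.eval_sub, Polynomial.eval_X,
          Polynomial.eval_C] at h
        have hzz : (z - α) ≠ 0 := sub_ne_zero.mpr hzα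
        rw [mul_assoc] at h
        exact mul_left_cancel₀ hzz h
      have hid : ∀ z ∈ Metric.ball (0:ℂ) 1, p1.eval z = q1.eval z * g z := by
        intro z hz
        by_cases hzα : z = α
        · subst hzα
          set s : Set ℂ := Metric.ball (0:ℂ) 1 \ {z} with hs
          have hsub : s ⊆ Metric.ball (0:ℂ) 1 := Set.diff_subset
          have h1 : Metric.ball (0:ℂ) 1 ∈ 𝓝 z := (Metric.isOpen_ball).mem_nhds hz
          have hfil : 𝓝[({z}ᶜ : Set ℂ)] z = 𝓝[s] z := by
            rw [show s = {z}ᶜ ∩ Metric.ball (0:ℂ) 1 by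
              ext w; simp [hs, Set.mem_diff, and_comm]]
            exact (nhdsWithin_inter_of_mem' (mem_nhdsWithin_of_mem_nhds h1)).symm
          have hne : (𝓝[s] z).NeBot := by
            rw [← hfil]; infer_instance
          have heq : ∀ᶠ w in 𝓝[s] z, p1.eval w = q1.eval w * g w := by
            filter_upwards [self_mem_nhdsWithin] with w hw
            exact hoff w (hsub hw) hw.2
          have t1 : Filter.Tendsto (fun w => p1.eval w) (𝓝[s] z) (𝓝 (p1.eval z)) :=
            (p1.continuousAt).tendsto.mono_left nhdsWithin_le_nhds
          have t2 : Filter.Tendsto (fun w => q1.eval w * g w) (𝓝[s] z)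
              (𝓝 (q1.eval z * g z)) := by
            refine Filter.Tendsto.mul ?_ ?_
            · exact (q1.continuousAt).tendsto.mono_left nhdsWithin_le_nhds
            · exact ((hg z hz).mono hsub).tendsto
          exact tendsto_nhds_unique (t1.congr' heq) t2
        · exact hoff z hz hzα
      have hq1deg : q1.natDegree ≤ N := by
        have hdq : q.natDegree = q1.natDegree + 1 := by
          rw [hq1, Polynomial.natDegree_mul (Polynomial.X_sub_C_ne_zero α) hq1ne,
            Polynomial.natDegree_X_sub_C]
          ring
        omega
      exact ih q1 p1 hq1deg hq1ne hid
    · push_neg at hex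
      refine ⟨p, q, hq, fun α hα => ?_, hpq⟩
      have hroot : q.IsRoot α := (Polynomial.mem_roots hq).mp hα
      by_contra hlt
      push_neg at hlt
      exact hex α (by rw [Metric.mem_ball, dist_zero_right]; exact hlt) hroot

set_option maxHeartbeats 1000000 in
/-- If `Σ a_n z^n` has positive integer coefficients, agrees with a rational function
near `0`, and `a_n^{1/n} → 1`, then `a_n` is bounded by a polynomial in `n`. -/
theorem rational_subexponential_implies_polynomial
    (a : ℕ → ℕ) (ha : ∀ n, 1 ≤ a n)
    (p q : Polynomial ℂ) (hq0 : q.eval 0 ≠ 0)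
    (ε : ℝ) (hε : 0 < ε)
    (hf : ∀ z ∈ Metric.ball (0 : ℂ) ε,
      HasSum (fun n : ℕ => (a n : ℂ) * z ^ n) (p.eval z / q.eval z))
    (hlim : Tendsto (fun n : ℕ => (a n : ℝ) ^ (1 / (n : ℝ))) atTop (nhds 1)) :
    ∃ β d : ℕ, ∀ n : ℕ, 1 ≤ n → a n ≤ β * n ^ d := by
  classical
  set F := FormalMultilinearSeries.ofScalars ℂ (fun n => (a n : ℂ)) with hF
  have hrad : 1 ≤ F.radius := radius_ge_one a hlim
  have hpos : 0 < F.radius := lt_of_lt_of_le one_pos hrad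
  have hball : HasFPowerSeriesOnBall F.sum F 0 F.radius := F.hasFPowerSeriesOnBall hpos
  set g : ℂ → ℂ := F.sum with hgdef
  have hsubset : Metric.ball (0:ℂ) 1 ⊆ Metric.eball (0:ℂ) F.radius := by
    intro z hz
    rw [Metric.mem_eball, edist_zero_right]
    calc (‖z‖₊ : ℝ≥0∞) < 1 := by
          rw [← ENNReal.coe_one, ENNReal.coe_lt_coe]
          rw [Metric.mem_ball, dist_zero_right] at hz
          exact_mod_cast hz
      _ ≤ F.radius := hrad
  have hsum : ∀ z ∈ Metric.ball (0:ℂ) 1,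
      HasSum (fun n : ℕ => (a n : ℂ) * z ^ n) (g z) := by
    intro z hz
    have h := hball.hasSum (y := z) (by simpa using hsubset hz)
    simp only [zero_add] at h
    have he : (fun n => F n fun _ => z) = fun n : ℕ => (a n : ℂ) * z ^ n := by
      funext n
      rw [hF, FormalMultilinearSeries.ofScalars_apply_eq, smul_eq_mul]
    rwa [he] at h
  have hganal : AnalyticOnNhd ℂ g (Metric.ball (0:ℂ) 1) :=
    (hball.analyticOnNhd).mono hsubset
  have hqanal : AnalyticOnNhd ℂ (fun z => q.eval z) (Metric.ball (0:ℂ) 1) :=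
    (AnalyticOnNhd.eval_polynomial (𝕜 := ℂ) q).mono (Set.subset_univ _)
  have hpanal : AnalyticOnNhd ℂ (fun z => p.eval z) (Metric.ball (0:ℂ) 1) :=
    (AnalyticOnNhd.eval_polynomial (𝕜 := ℂ) p).mono (Set.subset_univ _)
  have hqne : q ≠ 0 := by
    intro h; rw [h] at hq0; simp at hq0
  -- locally p = q * g near 0
  have heq0 : (fun z => p.eval z) =ᶠ[𝓝 (0:ℂ)] (fun z => q.eval z * g z) := by
    have h1 : ∀ᶠ z in 𝓝 (0:ℂ), q.eval z ≠ 0 := (q.continuousAt).eventually_ne hq0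
    have h2 : ∀ᶠ z in 𝓝 (0:ℂ), z ∈ Metric.ball (0:ℂ) ε :=
      (Metric.isOpen_ball).eventually_mem (by simp [hε])
    have h3 : ∀ᶠ z in 𝓝 (0:ℂ), z ∈ Metric.ball (0:ℂ) 1 :=
      (Metric.isOpen_ball).eventually_mem (by simp)
    filter_upwards [h1, h2, h3] with z hz1 hz2 hz3
    have hgz : g z = p.eval z / q.eval z := ((hsum z hz3).unique (hf z hz2))
    rw [hgz, mul_div_cancel₀ _ hz1]
  -- identity theorem
  have hpq : ∀ z ∈ Metric.ball (0:ℂ) 1, p.eval z = q.eval z * g z := by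
    have := AnalyticOnNhd.eqOn_of_preconnected_of_eventuallyEq hpanal
      (hqanal.mul hganal) (convex_ball (0:ℂ) 1).isPreconnected
      (Metric.mem_ball_self one_pos) heq0
    exact fun z hz => this hz
  obtain ⟨p1, q2, hq2ne, hq2roots, hid⟩ :=
    factor_roots_aux g hganal.continuousOn q.natDegree q p le_rfl hqne hpq
  set L : ℝ := ‖q2.leadingCoeff‖ with hLdef
  have hL : 0 < L := by
    rw [hLdef, norm_pos_iff]
    exact Polynomial.leadingCoeff_ne_zero.mpr hq2ne
  set C : ℝ := ∑ i ∈ Finset.range (p1.natDegree + 1), ‖p1.coeff i‖ with hCdef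
  have hC0 : 0 ≤ C := Finset.sum_nonneg fun i _ => norm_nonneg _
  set m : ℕ := q2.natDegree with hmdef
  clear_value L C m
  set B : ℝ := 3 * (C / L) * 2 ^ m with hBdef
  have hB0 : 0 ≤ B :=
    mul_nonneg (mul_nonneg (by norm_num) (div_nonneg hC0 hL.le)) (pow_nonneg (by norm_num) _)
  refine ⟨⌈B⌉₊, m, fun n hn => ?_⟩
  have hn1 : (1:ℝ) ≤ (n:ℝ) := by exact_mod_cast hn
  have hnpos : (0:ℝ) < n := by linarith
  set r : ℝ := (n:ℝ) / ((n:ℝ) + 1) with hrdef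
  have hr0 : 0 ≤ r := by positivity
  have hr1 : r < 1 := by
    rw [hrdef, div_lt_one (by linarith)]; linarith
  have h1r : 1 - r = 1 / ((n:ℝ) + 1) := by
    rw [hrdef]; field_simp; ring
  have hzball : (r : ℂ) ∈ Metric.ball (0:ℂ) 1 := by
    rw [Metric.mem_ball, dist_zero_right, Complex.norm_real, Real.norm_eq_abs,
      abs_of_nonneg hr0]
    exact hr1
  -- lower bound on q2 at r
  have hlow : L * (1 - r) ^ m ≤ ‖q2.eval (r:ℂ)‖ := by
    rw [hLdef, hmdef]; exact eval_lower_bound q2 hq2ne hq2roots r hr0 hr1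
  have hlowpos : 0 < L * (1 - r) ^ m :=
    mul_pos hL (pow_pos (by linarith) m)
  have hq2z : q2.eval (r:ℂ) ≠ 0 := by
    intro h
    rw [h, norm_zero] at hlow
    linarith
  -- norm of g at r
  have hup : ‖p1.eval (r:ℂ)‖ ≤ C := by
    rw [hCdef]; exact eval_upper_bound p1 r hr0 hr1.le
  have hgnorm : ‖g (r:ℂ)‖ ≤ C / (L * (1 - r) ^ m) := by
    have h := hid (r:ℂ) hzball
    have : ‖g (r:ℂ)‖ = ‖p1.eval (r:ℂ)‖ / ‖q2.eval (r:ℂ)‖ := by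
      rw [h, norm_mul, mul_comm, mul_div_assoc,
        div_self (by simpa [norm_eq_zero] using hq2z), mul_one]
    rw [this]
    exact div_le_div₀ hC0 hup hlowpos hlow
  -- real-valued sum
  have hhc : HasSum (fun k : ℕ => (a k : ℂ) * (r:ℂ) ^ k) (g (r:ℂ)) := hsum _ hzball
  have hhr : HasSum (fun k : ℕ => (a k : ℝ) * r ^ k) ((g (r:ℂ)).re) := by
    have h := ((Complex.hasSum_iff _ _).mp hhc).1
    have he : (fun k : ℕ => ((a k : ℂ) * (r:ℂ) ^ k).re) = fun k => (a k : ℝ) * r ^ k := by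
      funext k
      have hcast : ((a k : ℂ) * (r:ℂ) ^ k) = (((a k : ℝ) * r ^ k : ℝ) : ℂ) := by
        push_cast; ring
      rw [hcast, Complex.ofReal_re]
    rwa [he] at h
  have hterm : (a n : ℝ) * r ^ n ≤ (g (r:ℂ)).re :=
    le_hasSum hhr n (fun j _ => by positivity)
  have hre : (g (r:ℂ)).re ≤ ‖g (r:ℂ)‖ := by
    exact Complex.re_le_norm _
  have hmain : (a n : ℝ) * r ^ n ≤ (C / L) * ((n:ℝ) + 1) ^ m := by
    have e1 : C / (L * (1 - r) ^ m) = (C / L) * ((n:ℝ) + 1) ^ m := by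
      have hne : ((n:ℝ) + 1) ≠ 0 := by linarith
      rw [h1r]
      field_simp
      rw [one_div, inv_pow, mul_assoc, inv_mul_cancel₀ (pow_ne_zero _ hne), mul_one]
    calc (a n : ℝ) * r ^ n ≤ ‖g (r:ℂ)‖ := le_trans hterm hre
      _ ≤ C / (L * (1 - r) ^ m) := hgnorm
      _ = _ := e1
  -- r ^ n ≥ 1/3
  have hrn : (1:ℝ)/3 ≤ r ^ n := by
    have hexp : ((n:ℝ) + 1) ^ n ≤ 3 * (n:ℝ) ^ n := by
      have hle : 1 / (n:ℝ) + 1 ≤ Real.exp (1 / (n:ℝ)) := Real.add_one_le_exp _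
      have h2 : (1 / (n:ℝ) + 1) ^ n ≤ Real.exp (1 / (n:ℝ)) ^ n :=
        pow_le_pow_left₀ (by positivity) hle n
      have h3 : Real.exp (1 / (n:ℝ)) ^ n = Real.exp 1 := by
        rw [← Real.exp_nat_mul, mul_one_div, div_self (by positivity : (n:ℝ) ≠ 0)]
      have h4 : ((n:ℝ) + 1) / (n:ℝ) = 1 / (n:ℝ) + 1 := by field_simp; ring
      have h5 : (((n:ℝ) + 1) / (n:ℝ)) ^ n ≤ 3 := by
        rw [h4]
        calc (1 / (n:ℝ) + 1) ^ n ≤ Real.exp 1 := by rw [← h3]; exact h2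
          _ ≤ 3 := by linarith [Real.exp_one_lt_d9.le]
      rw [div_pow] at h5
      rw [div_le_iff₀ (by positivity)] at h5
      linarith
    rw [hrdef, div_pow, le_div_iff₀ (by positivity), div_mul_eq_mul_div,
      div_le_iff₀ (by norm_num)]
    linarith
  have h3 : (a n : ℝ) ≤ 3 * ((C / L) * ((n:ℝ) + 1) ^ m) := by
    have h6 : (a n : ℝ) * (1/3) ≤ (a n : ℝ) * r ^ n :=
      mul_le_mul_of_nonneg_left hrn (by positivity)
    linarith
  have h4 : (a n : ℝ) ≤ B * (n:ℝ) ^ m := by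
    have hle2 : ((n:ℝ) + 1) ^ m ≤ (2 * (n:ℝ)) ^ m :=
      pow_le_pow_left₀ (by linarith) (by linarith) m
    calc (a n : ℝ) ≤ 3 * ((C / L) * ((n:ℝ) + 1) ^ m) := h3
      _ ≤ 3 * ((C / L) * (2 * (n:ℝ)) ^ m) := by
          have := mul_le_mul_of_nonneg_left hle2 (div_nonneg hC0 hL.le)
          linarith
      _ = B * (n:ℝ) ^ m := by rw [hBdef, mul_pow]; ring
  have h5 : (a n : ℝ) ≤ (⌈B⌉₊ : ℝ) * (n:ℝ) ^ m :=
    h4.trans (mul_le_mul_of_nonneg_right (Nat.le_ceil B) (by positivity))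
  exact_mod_cast h5
end
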